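/- (HIT query decomposition takes at most 2·log steps.) For all natural numbers a < b, there exist a natural number m with 1 ≤ m ≤ 2·(⌊log₂(b − a)⌋ + 1), levels ℓ₁, …, ℓ_m ∈ ℕ, and a strictly decreasing sequence b = p₀ > p₁ > ⋯ > p_m = a such that for every t ∈ {1, …, m}: p_{t−1} − p_t = 2^{ℓ_t} and 2^{ℓ_t} divides p_{t−1}. (Thus the interval of blocks (a, b] can be partitioned into at most 2(⌊log₂(b−a)⌋+1) dyadic-aligned pieces (p_t, p_{t−1}], each covered by a single HIT table.) -/

import Mathlib

/-- A dyadic-aligned decomposition of the interval `(a, b]` into `m` pieces. -/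
def HitDecomp (a b m : ℕ) (p L : ℕ → ℕ) : Prop :=
  p 0 = b ∧ p m = a ∧ (∀ t < m, p (t + 1) < p t) ∧
  (∀ t, 1 ≤ t → t ≤ m → p (t - 1) - p t = 2 ^ L t ∧ 2 ^ L t ∣ p (t - 1))

lemma hitDecomp_nil (b : ℕ) : HitDecomp b b 0 (fun _ => b) (fun _ => 0) := by
  refine ⟨rfl, rfl, ?_, ?_⟩ <;> intro t ht <;> omega

lemma hitDecomp_single (ℓ b : ℕ) (hd : 2 ^ ℓ ∣ b) (hle : 2 ^ ℓ ≤ b) :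
    HitDecomp (b - 2 ^ ℓ) b 1 (fun t => if t = 0 then b else b - 2 ^ ℓ)
      (fun _ => ℓ) := by
  have hpos : 0 < 2 ^ ℓ := Nat.pow_pos (by norm_num)
  refine ⟨rfl, rfl, ?_, ?_⟩
  · intro t ht
    have : t = 0 := by omega
    subst this
    show b - 2 ^ ℓ < b
    omega
  · intro t h1 h2
    have : t = 1 := by omega
    subst this
    show b - (b - 2 ^ ℓ) = 2 ^ ℓ ∧ 2 ^ ℓ ∣ b
    exact ⟨by omega, hd⟩

lemma hitDecomp_glue {a c b m₁ m₂ : ℕ} {p₁ L₁ p₂ L₂ : ℕ → ℕ}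
    (h₁ : HitDecomp c b m₁ p₁ L₁) (h₂ : HitDecomp a c m₂ p₂ L₂) :
    HitDecomp a b (m₁ + m₂)
      (fun t => if t ≤ m₁ then p₁ t else p₂ (t - m₁))
      (fun t => if t ≤ m₁ then L₁ t else L₂ (t - m₁)) := by
  obtain ⟨h10, h1m, h1mono, h1step⟩ := h₁
  obtain ⟨h20, h2m, h2mono, h2step⟩ := h₂
  have hkey : p₁ m₁ = p₂ 0 := by rw [h1m, h20]
  refine ⟨by simp [h10], ?_, ?_, ?_⟩
  · by_cases h : m₂ = 0
    · subst h; simp only [Nat.add_zero, if_pos le_rfl]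
      rw [h1m, ← h20, ← h2m]
    · have : ¬ m₁ + m₂ ≤ m₁ := by omega
      simp only [if_neg this, Nat.add_sub_cancel_left, h2m]
  · intro t ht
    by_cases h : t + 1 ≤ m₁
    · simp only [if_pos h, if_pos (by omega : t ≤ m₁)]
      exact h1mono t (by omega)
    · by_cases h' : t ≤ m₁
      · have htm : t = m₁ := by omega
        simp only [if_neg h, if_pos h', htm, Nat.add_sub_cancel_left]
        rw [hkey]
        simpa using h2mono 0 (by omega)
      · simp only [if_neg h, if_neg h']
        have : t + 1 - m₁ = (t - m₁) + 1 := by omega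
        rw [this]
        exact h2mono (t - m₁) (by omega)
  · intro t h1 h2
    by_cases h : t ≤ m₁
    · simp only [if_pos h, if_pos (by omega : t - 1 ≤ m₁)]
      exact h1step t h1 h
    · simp only [if_neg h]
      by_cases h' : t - 1 ≤ m₁
      · have h1m1 : t - 1 = m₁ := by omega
        have htm : t - m₁ = 1 := by omega
        simp only [if_pos h', h1m1, htm]
        rw [hkey]
        simpa using h2step 1 le_rfl (by omega)
      · simp only [if_neg h']
        have e1 : t - 1 - m₁ = (t - m₁) - 1 := by omega
        rw [e1]
        exact h2step (t - m₁) (by omega) (by omega)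

/-- Bottom decomposition: `(a, c]` with `2^k ∣ c` and `c - a < 2^(k+1)`
decomposes into at most `k + 1` pieces. -/
lemma hit_bottom : ∀ k a c : ℕ, a < c → 2 ^ k ∣ c → c - a < 2 ^ (k + 1) →
    ∃ m p L, 1 ≤ m ∧ m ≤ k + 1 ∧ HitDecomp a c m p L := by
  intro k
  induction k with
  | zero =>
    intro a c hac hd hlt
    have hca : c - a = 1 := by omega
    have ha : a = c - 2 ^ 0 := by simp; omega
    refine ⟨1, _, _, le_rfl, le_rfl, ha ▸ hitDecomp_single 0 c (one_dvd c) (by omega)⟩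
  | succ k ih =>
    intro a c hac hd hlt
    by_cases hsmall : c - a < 2 ^ (k + 1)
    · obtain ⟨m, p, L, hm1, hm2, hdec⟩ :=
        ih a c hac (dvd_trans (pow_dvd_pow 2 (Nat.le_succ k)) hd) hsmall
      exact ⟨m, p, L, hm1, by omega, hdec⟩
    · have hle : 2 ^ (k + 1) ≤ c := le_trans (by omega) (Nat.sub_le c a)
      have hstep := hitDecomp_single (k + 1) c hd hle
      by_cases heq : a = c - 2 ^ (k + 1)
      · exact ⟨1, _, _, le_rfl, by omega, heq ▸ hstep⟩
      · have hac' : a < c - 2 ^ (k + 1) := by omega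
        have hd' : 2 ^ k ∣ c - 2 ^ (k + 1) :=
          Nat.dvd_sub (dvd_trans (pow_dvd_pow 2 (Nat.le_succ k)) hd)
            (pow_dvd_pow 2 (Nat.le_succ k))
        have hlt' : c - 2 ^ (k + 1) - a < 2 ^ (k + 1) := by
          have := Nat.pow_lt_pow_succ (a := 2) (by norm_num) (n := k + 1)
          omega
        obtain ⟨m, p, L, hm1, hm2, hdec⟩ := ih a (c - 2 ^ (k + 1)) hac' hd' hlt'
        exact ⟨1 + m, _, _, by omega, by omega, hitDecomp_glue hstep hdec⟩

/-- Top decomposition: `(c, b]` with `2^k ∣ c` and `b - c < 2^k`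
decomposes into at most `k` pieces. -/
lemma hit_top : ∀ k c b : ℕ, c ≤ b → 2 ^ k ∣ c → b - c < 2 ^ k →
    ∃ m p L, m ≤ k ∧ HitDecomp c b m p L := by
  intro k
  induction k with
  | zero =>
    intro c b hcb hd hlt
    have : c = b := by omega
    subst this
    exact ⟨0, _, _, le_rfl, hitDecomp_nil c⟩
  | succ k ih =>
    intro c b hcb hd hlt
    by_cases hsmall : b - c < 2 ^ k
    · obtain ⟨m, p, L, hm, hdec⟩ :=
        ih c b hcb (dvd_trans (pow_dvd_pow 2 (Nat.le_succ k)) hd) hsmall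
      exact ⟨m, p, L, by omega, hdec⟩
    · set c' := c + 2 ^ k with hc'
      have hc'b : c' ≤ b := by omega
      have hd' : 2 ^ k ∣ c' :=
        Nat.dvd_add (dvd_trans (pow_dvd_pow 2 (Nat.le_succ k)) hd) dvd_rfl
      have hlt' : b - c' < 2 ^ k := by
        have := Nat.pow_lt_pow_succ (a := 2) (by norm_num) (n := k)
        omega
      obtain ⟨m, p, L, hm, hdec⟩ := ih c' b hc'b hd' hlt'
      have hstep := hitDecomp_single k c' hd' (by omega)
      have hcc : c = c' - 2 ^ k := by omega
      exact ⟨m + 1, _, _, by omega, hitDecomp_glue hdec (hcc ▸ hstep)⟩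

/-- HIT query decomposition takes at most `2·(⌊log₂(b−a)⌋+1)` steps: the block
interval `(a, b]` can be partitioned into `m ≤ 2·(⌊log₂(b−a)⌋+1)` dyadic-aligned
pieces `(p_t, p_{t−1}]`, each of length `2^{ℓ_t}` with `2^{ℓ_t} ∣ p_{t−1}`. -/
theorem hit_query_decomposition (a b : ℕ) (hab : a < b) :
    ∃ m : ℕ, 1 ≤ m ∧ m ≤ 2 * (Nat.log 2 (b - a) + 1) ∧
      ∃ p : ℕ → ℕ, ∃ L : ℕ → ℕ,
        p 0 = b ∧ p m = a ∧
        (∀ t < m, p (t + 1) < p t) ∧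
        (∀ t, 1 ≤ t → t ≤ m →
          p (t - 1) - p t = 2 ^ L t ∧ 2 ^ L t ∣ p (t - 1)) := by
  set n := b - a with hn
  set d := Nat.log 2 n with hd
  have hn0 : n ≠ 0 := by omega
  have hpow_le : 2 ^ d ≤ n := Nat.pow_log_le_self 2 hn0
  have hlt_pow : n < 2 ^ (d + 1) := Nat.lt_pow_succ_log_self (by norm_num) n
  set c := 2 ^ d * (b / 2 ^ d) with hc
  have hcb : c ≤ b := Nat.mul_div_le b (2 ^ d)
  have hdvd : 2 ^ d ∣ c := Dvd.intro _ rfl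
  have hmb := Nat.mod_add_div b (2 ^ d)
  have hmod : b - c = b % 2 ^ d := by omega
  have hmodlt : b % 2 ^ d < 2 ^ d := Nat.mod_lt b (Nat.pow_pos (by norm_num))
  have hbc : b - c < 2 ^ d := by omega
  have hac : a < c := by omega
  obtain ⟨m₁, p₁, L₁, hm₁, hdec₁⟩ := hit_top d c b hcb hdvd hbc
  obtain ⟨m₂, p₂, L₂, hm₂1, hm₂2, hdec₂⟩ := hit_bottom d a c hac hdvd (by omega)
  refine ⟨m₁ + m₂, by omega, by omega,
    (fun t => if t ≤ m₁ then p₁ t else p₂ (t - m₁)),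
    (fun t => if t ≤ m₁ then L₁ t else L₂ (t - m₁)), ?_⟩
  exact hitDecomp_glue hdec₁ hdec₂
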